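/- Let k > 2 be an integer that is not prime. Let A be a nonempty subset of ℤ/kℤ, let q be an integer with gcd(q, k) ≠ 1, and let B be a subset of ℤ/kℤ with 0 ∈ B and B ⊆ {0, q̄} ∪ {b̄ : b ∈ ℤ, gcd(b, k) = 1}, where x̄ denotes the residue of x modulo k. If |A + {0, q̄}| ≥ |A| + 1, then |A + B| ≥ min(k, |A| + |B| − 1). -/

import Mathlib

open Finset Pointwise

-- e-transform lemmas
lemma etrans_subset (k : ℕ) (A B : Finset (ZMod k)) (a : ZMod k) (ha : a ∈ A) :
    (A ∪ B.image (a + ·)) + (B.filter (fun x => a + x ∈ A)) ⊆ A + B := by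
  intro x hx
  rw [Finset.mem_add] at hx
  obtain ⟨u, hu, v, hv, rfl⟩ := hx
  rw [Finset.mem_filter] at hv
  rw [Finset.mem_union] at hu
  rcases hu with hu | hu
  · exact Finset.add_mem_add hu hv.1
  · rw [Finset.mem_image] at hu
    obtain ⟨t, ht, rfl⟩ := hu
    have : (a + v) + t = a + t + v := by ring
    rw [show a + t + v = (a + v) + t by ring]
    exact Finset.add_mem_add hv.2 ht

lemma etrans_card (k : ℕ) (A B : Finset (ZMod k)) (a : ZMod k) :
    (A ∪ B.image (a + ·)).card + (B.filter (fun x => a + x ∈ A)).card = A.card + B.card := by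
  have hinj : Function.Injective (a + ·) := add_right_injective a
  have h1 : (B.image (a + ·)) \ A = (B.filter (fun x => a + x ∉ A)).image (a + ·) := by
    ext x
    simp only [Finset.mem_sdiff, Finset.mem_image, Finset.mem_filter]
    constructor
    · rintro ⟨⟨t, ht, rfl⟩, hx⟩; exact ⟨t, ⟨ht, hx⟩, rfl⟩
    · rintro ⟨t, ⟨ht, hx⟩, rfl⟩; exact ⟨⟨t, ht, rfl⟩, hx⟩
  have h2 : (A ∪ B.image (a + ·)).card = A.card + ((B.image (a + ·)) \ A).card := by
    rw [Finset.union_comm]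
    rw [← Finset.card_sdiff_add_card]
    omega
  rw [h2, h1, Finset.card_image_of_injective _ hinj]
  have := Finset.card_filter_add_card_filter_not (s := B) (p := fun x => a + x ∈ A)
  omega

lemma chowla (k : ℕ) (hk : 0 < k) : ∀ n (A B : Finset (ZMod k)), B.card = n →
    A.Nonempty → (0 : ZMod k) ∈ B → (∀ x ∈ B, x = 0 ∨ IsUnit x) →
    min k (A.card + B.card - 1) ≤ (A + B).card := by
  haveI : NeZero k := ⟨by omega⟩
  intro n
  induction n using Nat.strong_induction_on with
  | _ n ih =>
  intro A B hn hA h0 hB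
  by_cases hB0 : B = {0}
  · subst hB0
    have h5 : A + ({0} : Finset (ZMod k)) = A := by simp [Finset.add_singleton]
    rw [h5, Finset.card_singleton]
    omega
  · -- there is a nonzero (unit) element b ∈ B
    have : ∃ b ∈ B, b ≠ 0 := by
      by_contra h
      push_neg at h
      apply hB0
      apply Finset.Subset.antisymm
      · intro x hx; simp [h x hx]
      · simp [h0]
    obtain ⟨b, hbB, hb0⟩ := this
    have hbu : IsUnit b := (hB b hbB).resolve_left hb0
    by_cases hcl : ∀ a ∈ A, a + b ∈ A
    · -- A is closed under +b with b a unit, so A = univ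
      have hstep : ∀ (m : ℕ), ∀ a ∈ A, a + m • b ∈ A := by
        intro m
        induction m with
        | zero => simp
        | succ i hi =>
          intro a ha
          have := hcl _ (hi a ha)
          rwa [succ_nsmul, ← add_assoc]
      have hAuniv : A = Finset.univ := by
        obtain ⟨a, ha⟩ := hA
        apply Finset.eq_univ_of_forall
        intro x
        obtain ⟨c, hc⟩ := hbu.exists_left_inv
        have hx : x = a + ((x - a) * c).val • b := by
          rw [nsmul_eq_mul, ZMod.natCast_val, ZMod.cast_id, mul_assoc, hc, mul_one]
          ring
        rw [hx]
        exact hstep _ a ha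
      have : A ⊆ A + B := by
        intro x hx
        have : x + 0 ∈ A + B := Finset.add_mem_add hx h0
        simpa using this
      have : Finset.univ ⊆ A + B := hAuniv ▸ this
      have hcard : k ≤ (A + B).card := by
        have := Finset.card_le_card this
        simpa [ZMod.card] using this
      omega
    · push_neg at hcl
      obtain ⟨a, ha, hab⟩ := hcl
      set A' := A ∪ B.image (a + ·) with hA'
      set B' := B.filter (fun x => a + x ∈ A) with hB'
      have hsub : A' + B' ⊆ A + B := etrans_subset k A B a ha
      have hcard : A'.card + B'.card = A.card + B.card := etrans_card k A B a
      have h0' : (0 : ZMod k) ∈ B' := by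
        rw [hB', Finset.mem_filter]
        exact ⟨h0, by simpa using ha⟩
      have hbnot : b ∉ B' := by
        rw [hB', Finset.mem_filter]
        tauto
      have hBsub : B' ⊆ B := Finset.filter_subset _ _
      have hlt : B'.card < n := by
        rw [← hn]
        exact Finset.card_lt_card (Finset.ssubset_iff_of_subset hBsub |>.2 ⟨b, hbB, hbnot⟩)
      have hA'ne : A'.Nonempty := hA.mono Finset.subset_union_left
      have := ih B'.card hlt A' B' rfl hA'ne h0' (fun x hx => hB x (hBsub hx))
      have hle : (A' + B').card ≤ (A + B).card := Finset.card_le_card hsub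
      omega

/-- Let `k > 2` be an integer that is not prime, `A` a nonempty subset of `ℤ/kℤ`, `q` an
integer with `gcd(q, k) ≠ 1`, and `B ⊆ ℤ/kℤ` with `0 ∈ B` and
`B ⊆ {0, q̄} ∪ {b̄ : gcd(b, k) = 1}`. If `|A + {0, q̄}| ≥ |A| + 1`, then
`|A + B| ≥ min(k, |A| + |B| − 1)`. -/
theorem stmt_12 (k : ℕ) (hk2 : 2 < k) (hknp : ¬ k.Prime)
    (A : Finset (ZMod k)) (hA : A.Nonempty)
    (q : ℤ) (hq : q.gcd (k : ℤ) ≠ 1)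
    (B : Finset (ZMod k)) (h0B : (0 : ZMod k) ∈ B)
    (hB : ∀ x ∈ B, x = 0 ∨ x = (q : ZMod k) ∨ ∃ b : ℤ, b.gcd (k : ℤ) = 1 ∧ (b : ZMod k) = x)
    (hAq : A.card + 1 ≤ (A + ({0, (q : ZMod k)} : Finset (ZMod k))).card) :
    min k (A.card + B.card - 1) ≤ (A + B).card := by
  have hk : 0 < k := by omega
  haveI : NeZero k := ⟨by omega⟩
  -- units fact
  have hunit : ∀ b : ℤ, b.gcd (k : ℤ) = 1 → IsUnit ((b : ZMod k)) := by
    intro b hb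
    have hcop : IsCoprime b (k : ℤ) := Int.isCoprime_iff_gcd_eq_one.2 hb
    obtain ⟨u, v, huv⟩ := hcop
    have : (u : ZMod k) * (b : ZMod k) = 1 := by
      have := congrArg (fun x : ℤ => (x : ZMod k)) huv
      push_cast at this
      simpa [ZMod.natCast_self] using this
    exact IsUnit.of_mul_eq_one _ (mul_comm (u : ZMod k) (b:ZMod k) ▸ this)
  -- q̄ is not a period of A: find a with a + q̄ ∉ A
  have hex : ∃ a ∈ A, a + (q : ZMod k) ∉ A := by
    by_contra h
    push_neg at h
    have hsub : A + ({0, (q : ZMod k)} : Finset (ZMod k)) ⊆ A := by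
      intro x hx
      rw [Finset.mem_add] at hx
      obtain ⟨u, hu, v, hv, rfl⟩ := hx
      rcases Finset.mem_insert.1 hv with rfl | hv
      · simpa using hu
      · rw [Finset.mem_singleton] at hv
        subst hv
        exact h u hu
    have := Finset.card_le_card hsub
    omega
  by_cases hqB : (q : ZMod k) ∈ B
  · obtain ⟨a, ha, haq⟩ := hex
    set A' := A ∪ B.image (a + ·) with hA'
    set B' := B.filter (fun x => a + x ∈ A) with hB'
    have hsub : A' + B' ⊆ A + B := etrans_subset k A B a ha
    have hcard : A'.card + B'.card = A.card + B.card := etrans_card k A B a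
    have h0' : (0 : ZMod k) ∈ B' := by
      rw [hB', Finset.mem_filter]; exact ⟨h0B, by simpa using ha⟩
    have hB' : ∀ x ∈ B', x = 0 ∨ IsUnit x := by
      intro x hx
      rw [Finset.mem_filter] at hx
      rcases hB x hx.1 with h | h | ⟨b, hb, rfl⟩
      · exact Or.inl h
      · subst h; exact absurd hx.2 haq
      · exact Or.inr (hunit b hb)
    have hA'ne : A'.Nonempty := hA.mono Finset.subset_union_left
    have := chowla k hk B'.card A' B' rfl hA'ne h0' hB'
    have hle : (A' + B').card ≤ (A + B).card := Finset.card_le_card hsub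
    omega
  · have hB' : ∀ x ∈ B, x = 0 ∨ IsUnit x := by
      intro x hx
      rcases hB x hx with h | h | ⟨b, hb, rfl⟩
      · exact Or.inl h
      · subst h; exact absurd hx hqB
      · exact Or.inr (hunit b hb)
    exact chowla k hk B.card A B rfl hA h0B hB'
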